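/- arXiv:1302.0432 — 3 statements merged into one kernel-verified Lean document; each statement's English description precedes it below -/
import Mathlib

section
/- If B is a Hermitian positive definite n×n complex matrix, then there exists an invertible n×n matrix X and a real diagonal matrix Λ such that X*BX = I and AX = BXΛ, for any Hermitian n×n matrix A; moreover B⁻¹A = XΛX⁻¹. -/
open Matrix
open scoped ComplexOrder

/-- Simultaneous diagonalization of a Hermitian pencil (A, B) with B positive
definite: there exist an invertible `X` and real diagonal `Λ` with
`Xᴴ B X = 1`, `A X = B X Λ`, and `B⁻¹ A = X Λ X⁻¹`. -/
theorem stmt0 (n : ℕ) (A B : Matrix (Fin n) (Fin n) ℂ)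
    (hA : A.IsHermitian) (hB : B.PosDef) :
    ∃ (X : Matrix (Fin n) (Fin n) ℂ) (d : Fin n → ℝ),
      IsUnit X ∧
      Xᴴ * B * X = 1 ∧
      A * X = B * X * Matrix.diagonal (fun i => (d i : ℂ)) ∧
      B⁻¹ * A = X * Matrix.diagonal (fun i => (d i : ℂ)) * X⁻¹ := by
  classical
  set S := (open scoped MatrixOrder in CFC.sqrt B) with hSdef
  have hSherm : S.IsHermitian := open scoped MatrixOrder in (CFC.sqrt_nonneg B).posSemidef.1
  have hSS : S * S = B := open scoped MatrixOrder in CFC.sqrt_mul_sqrt_self B hB.posSemidef.nonneg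
  have hBunit : IsUnit B := hB.isUnit
  have hSunit : IsUnit S.det := by
    have hdet : IsUnit (S.det * S.det) := by
      rw [← Matrix.det_mul, hSS]
      exact (Matrix.isUnit_iff_isUnit_det B).mp hBunit
    exact isUnit_of_mul_isUnit_left hdet
  have hSinv : S⁻¹ * S = 1 := Matrix.nonsing_inv_mul S hSunit
  have hSinv' : S * S⁻¹ = 1 := Matrix.mul_nonsing_inv S hSunit
  have hSinvHerm : (S⁻¹)ᴴ = S⁻¹ := by
    rw [Matrix.conjTranspose_nonsing_inv, hSherm.eq]
  set M := S⁻¹ * A * S⁻¹ with hMdef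
  have hM : M.IsHermitian := by
    rw [Matrix.IsHermitian, hMdef, Matrix.conjTranspose_mul, Matrix.conjTranspose_mul,
      hSinvHerm, hA.eq, mul_assoc]
  set U : Matrix (Fin n) (Fin n) ℂ := (hM.eigenvectorUnitary : Matrix (Fin n) (Fin n) ℂ)
    with hUdef
  have hUU : star U * U = (1 : Matrix (Fin n) (Fin n) ℂ) :=
    Matrix.mem_unitaryGroup_iff'.mp hM.eigenvectorUnitary.2
  have hUU' : U * star U = (1 : Matrix (Fin n) (Fin n) ℂ) :=
    Matrix.mem_unitaryGroup_iff.mp hM.eigenvectorUnitary.2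
  set d := hM.eigenvalues with hddef
  have hspec : M = U * Matrix.diagonal (fun i => (d i : ℂ)) * star U := by
    have := hM.spectral_theorem
    rw [Unitary.conjStarAlgAut_apply] at this
    exact this
  have hXinv : (S⁻¹ * U)⁻¹ = star U * S := by
    apply Matrix.inv_eq_right_inv
    rw [mul_assoc, ← mul_assoc U (star U) S, hUU', one_mul, hSinv]
  refine ⟨S⁻¹ * U, d, ?_, ?_, ?_, ?_⟩
  · apply (Matrix.isUnit_iff_isUnit_det _).mpr
    refine IsUnit.of_mul_eq_one ((star U * S).det) ?_
    rw [← Matrix.det_mul]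
    rw [mul_assoc, ← mul_assoc U (star U) S, hUU', one_mul, hSinv, Matrix.det_one]
  · rw [← hSS, Matrix.conjTranspose_mul, hSinvHerm]
    simp only [mul_assoc]
    rw [← mul_assoc S S⁻¹ U, hSinv', one_mul, ← mul_assoc S⁻¹ S U, hSinv, one_mul]
    simpa [Matrix.star_eq_conjTranspose] using hUU
  · have hAX : A * (S⁻¹ * U) = S * M * U := by
      rw [hMdef, ← mul_assoc, ← mul_assoc, ← mul_assoc, hSinv', one_mul, mul_assoc]
    have hBX : B * (S⁻¹ * U) = S * U := by
      rw [← hSS, mul_assoc, ← mul_assoc S S⁻¹ U, hSinv', one_mul]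
    rw [hAX, hBX, hspec]
    simp only [mul_assoc]
    rw [hUU, mul_one]
  · rw [hXinv, ← hSS, Matrix.mul_inv_rev]
    have key : S⁻¹ * S⁻¹ * A = S⁻¹ * M * S := by
      simp only [hMdef, mul_assoc]
      rw [hSinv, mul_one]
    rw [key, hspec]
    simp only [mul_assoc]
end

section
/- Let B = C*C be Hermitian positive definite (C invertible), and let X_t (n×m) and X_b (n×(n−m)) have B-orthonormal columns with X_t* B X_b = 0. Suppose Q = [ (X_t + X_b G)L⁻¹ V ] U is B-orthonormal (Q*BQ = I_p), where ‖G‖ = ε ≤ 1/2, U is p×p unitary, and L⁻¹ = (I_m + G*G)^{−1/2}. Write V = X_t S + X_b T where S = X_t*BV, T = X_b*BV. Then (a) ‖L⁻¹ − I_m‖ ≤ ε²; (b) ‖S‖ ≤ ε; (c) T*T = I_{p−m} − S*S, and R := (T*T)^{1/2} satisfies ‖R − I_{p−m}‖ ≤ ε², and H := T R⁻¹ satisfies H*H = I_{p−m}. -/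
open Matrix
open scoped ComplexOrder Matrix.Norms.L2Operator

lemma myOpNorm_le_bound {k l : ℕ} (A : Matrix (Fin k) (Fin l) ℂ) {c : ℝ} (hc : 0 ≤ c)
    (h : ∀ x : EuclideanSpace ℂ (Fin l),
      ‖(EuclideanSpace.equiv (Fin k) ℂ).symm (A *ᵥ x)‖ ≤ c * ‖x‖) :
    ‖A‖ ≤ c := by
  rw [Matrix.l2_opNorm_def]
  exact ContinuousLinearMap.opNorm_le_bound _ hc h

lemma myNormSq {k : ℕ} (v : Fin k → ℂ) :
    ‖(EuclideanSpace.equiv (Fin k) ℂ).symm v‖ ^ 2 = RCLike.re (star v ⬝ᵥ v) := by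
  rw [← inner_self_eq_norm_sq (𝕜 := ℂ) ((EuclideanSpace.equiv (Fin k) ℂ).symm v),
    EuclideanSpace.inner_eq_star_dotProduct]
  simp
  rw [dotProduct_comm]

lemma myQF {k l : ℕ} (A : Matrix (Fin k) (Fin l) ℂ) (v : Fin l → ℂ) :
    star (A *ᵥ v) ⬝ᵥ (A *ᵥ v) = star v ⬝ᵥ ((Aᴴ * A) *ᵥ v) := by
  simp [Matrix.star_mulVec, Matrix.dotProduct_mulVec, Matrix.vecMul_vecMul]

/-- If `TᴴT = 1 - E` with `E` psd, then `‖T‖ ≤ 1`. -/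
lemma myNorm_le_one {k l : ℕ} (T : Matrix (Fin k) (Fin l) ℂ) (E : Matrix (Fin l) (Fin l) ℂ)
    (hE : E.PosSemidef) (h : Tᴴ * T = 1 - E) : ‖T‖ ≤ 1 := by
  apply myOpNorm_le_bound _ zero_le_one
  intro x
  have key : ‖(EuclideanSpace.equiv (Fin k) ℂ).symm (T *ᵥ x)‖ ^ 2 ≤ ‖x‖ ^ 2 := by
    rw [myNormSq, myQF, h]
    have hxx : ‖x‖ ^ 2 = RCLike.re (star (x : Fin l → ℂ) ⬝ᵥ (x : Fin l → ℂ)) := by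
      simpa using myNormSq (k := l) x
    rw [hxx, Matrix.sub_mulVec, Matrix.one_mulVec, dotProduct_sub, map_sub]
    have := hE.re_dotProduct_nonneg (x : Fin l → ℂ)
    linarith
  have h1 := norm_nonneg ((EuclideanSpace.equiv (Fin k) ℂ).symm (T *ᵥ x))
  have h2 := norm_nonneg x
  nlinarith

/-- `1 + P` is invertible for psd `P`, and its inverse has norm at most 1. -/
lemma myInv_bound {k : ℕ} {P : Matrix (Fin k) (Fin k) ℂ} (hP : P.PosSemidef) :
    IsUnit (1 + P) ∧ ‖(1 + P)⁻¹‖ ≤ 1 := by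
  have hpd : (1 + P).PosDef := Matrix.PosDef.add_posSemidef Matrix.PosDef.one hP
  refine ⟨hpd.isUnit, ?_⟩
  apply myOpNorm_le_bound _ zero_le_one
  intro x
  set y : Fin k → ℂ := (1 + P)⁻¹ *ᵥ x with hy
  have hinv : (1 + P) * (1 + P)⁻¹ = 1 :=
    Matrix.mul_nonsing_inv _ ((Matrix.isUnit_iff_isUnit_det _).mp hpd.isUnit)
  have hyx : (1 + P) *ᵥ y = x := by
    rw [hy, Matrix.mulVec_mulVec, hinv, Matrix.one_mulVec]
  set Y : EuclideanSpace ℂ (Fin k) := (EuclideanSpace.equiv (Fin k) ℂ).symm y with hY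
  have h1 : ‖Y‖ ^ 2 ≤ RCLike.re (star y ⬝ᵥ x) := by
    rw [← hyx, Matrix.add_mulVec, Matrix.one_mulVec, dotProduct_add, map_add, hY, myNormSq]
    have := hP.re_dotProduct_nonneg y
    linarith
  have h2 : RCLike.re (star y ⬝ᵥ x) ≤ ‖Y‖ * ‖x‖ := by
    have hi : (inner ℂ Y x : ℂ) = star y ⬝ᵥ (x : Fin k → ℂ) := by
      rw [EuclideanSpace.inner_eq_star_dotProduct]; simp [hY]; rw [dotProduct_comm]
    calc RCLike.re (star y ⬝ᵥ x) = RCLike.re (inner ℂ Y x : ℂ) := by rw [hi]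
      _ ≤ ‖(inner ℂ Y x : ℂ)‖ := RCLike.re_le_norm _
      _ ≤ ‖Y‖ * ‖x‖ := norm_inner_le_norm Y x
  have h3 : ‖Y‖ ^ 2 ≤ ‖Y‖ * ‖x‖ := le_trans h1 h2
  have h4 := norm_nonneg Y
  have h5 := norm_nonneg x
  have : ‖Y‖ ≤ ‖x‖ := by nlinarith
  simpa [hY, one_mul] using this

/-- from `X * M = Y` and `M * M⁻¹ = 1`, get `X = Y * M⁻¹`. -/
lemma myDivide {k l : ℕ} {X Y : Matrix (Fin l) (Fin k) ℂ} {M : Matrix (Fin k) (Fin k) ℂ}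
    (hM : M * M⁻¹ = 1) (h : X * M = Y) : X = Y * M⁻¹ := by
  calc X = X * (M * M⁻¹) := by rw [hM, Matrix.mul_one]
    _ = (X * M) * M⁻¹ := by rw [Matrix.mul_assoc]
    _ = Y * M⁻¹ := by rw [h]

set_option maxHeartbeats 2000000 in
/-- Structure of the `B`-orthonormal basis `Q = [ (X_t + X_b G)L⁻¹  V ] U`:
bounds on `L⁻¹ − I`, on `S = X_tᴴBV`, the identity `TᴴT = I − SᴴS` for
`T = X_bᴴBV`, and the polar-type factors `R = (TᴴT)^{1/2}`, `H = TR⁻¹` with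
`HᴴH = I`. -/
theorem stmt16 (n m b r : ℕ)
    (C B : Matrix (Fin n) (Fin n) ℂ) (hC : IsUnit C) (hB : B = Cᴴ * C)
    (Xt : Matrix (Fin n) (Fin m) ℂ) (Xb : Matrix (Fin n) (Fin b) ℂ)
    (hXt : Xtᴴ * B * Xt = 1) (hXb : Xbᴴ * B * Xb = 1) (hXtb : Xtᴴ * B * Xb = 0)
    (G : Matrix (Fin b) (Fin m) ℂ) (ε : ℝ) (hε : ‖G‖ = ε) (hε2 : ε ≤ 1 / 2)
    (Linv : Matrix (Fin m) (Fin m) ℂ)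
    (hLpsd : Linv.PosSemidef) (hLinv : Linv * (1 + Gᴴ * G) * Linv = 1)
    (V : Matrix (Fin n) (Fin r) ℂ)
    (hVBV : Vᴴ * B * V = 1)
    (horth : ((Xt + Xb * G) * Linv)ᴴ * B * V = 0)
    (hspan : V = Xt * (Xtᴴ * B * V) + Xb * (Xbᴴ * B * V)) :
    ‖Linv - 1‖ ≤ ε ^ 2 ∧
    ‖Xtᴴ * B * V‖ ≤ ε ∧
    (Xbᴴ * B * V)ᴴ * (Xbᴴ * B * V) = 1 - (Xtᴴ * B * V)ᴴ * (Xtᴴ * B * V) ∧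
    ∃ R : Matrix (Fin r) (Fin r) ℂ,
      R.PosSemidef ∧ R * R = (Xbᴴ * B * V)ᴴ * (Xbᴴ * B * V) ∧
      ‖R - 1‖ ≤ ε ^ 2 ∧ IsUnit R ∧
      ((Xbᴴ * B * V) * R⁻¹)ᴴ * ((Xbᴴ * B * V) * R⁻¹) = 1 := by
  have hε0 : 0 ≤ ε := hε ▸ norm_nonneg G
  set S : Matrix (Fin m) (Fin r) ℂ := Xtᴴ * B * V with hS
  set T : Matrix (Fin b) (Fin r) ℂ := Xbᴴ * B * V with hT
  -- B is Hermitian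
  have hBH : Bᴴ = B := by rw [hB]; simp [Matrix.conjTranspose_mul]
  have hXbt : Xbᴴ * B * Xt = 0 := by
    have h := congrArg Matrix.conjTranspose hXtb
    simpa [Matrix.conjTranspose_mul, Matrix.mul_assoc, hBH] using h
  -- reassociated product rules
  have hA1 : ∀ {k : ℕ} (W : Matrix (Fin m) (Fin k) ℂ), Xtᴴ * (B * (Xt * W)) = W := by
    intro k W
    calc Xtᴴ * (B * (Xt * W)) = (Xtᴴ * B * Xt) * W := by simp [Matrix.mul_assoc]
      _ = W := by rw [hXt, Matrix.one_mul]
  have hA2 : ∀ {k : ℕ} (W : Matrix (Fin b) (Fin k) ℂ), Xtᴴ * (B * (Xb * W)) = 0 := by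
    intro k W
    calc Xtᴴ * (B * (Xb * W)) = (Xtᴴ * B * Xb) * W := by simp [Matrix.mul_assoc]
      _ = 0 := by rw [hXtb, Matrix.zero_mul]
  have hA3 : ∀ {k : ℕ} (W : Matrix (Fin m) (Fin k) ℂ), Xbᴴ * (B * (Xt * W)) = 0 := by
    intro k W
    calc Xbᴴ * (B * (Xt * W)) = (Xbᴴ * B * Xt) * W := by simp [Matrix.mul_assoc]
      _ = 0 := by rw [hXbt, Matrix.zero_mul]
  have hA4 : ∀ {k : ℕ} (W : Matrix (Fin b) (Fin k) ℂ), Xbᴴ * (B * (Xb * W)) = W := by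
    intro k W
    calc Xbᴴ * (B * (Xb * W)) = (Xbᴴ * B * Xb) * W := by simp [Matrix.mul_assoc]
      _ = W := by rw [hXb, Matrix.one_mul]
  -- Gram identity
  have hGram : Sᴴ * S + Tᴴ * T = 1 := by
    have h1 : (Xt * S + Xb * T)ᴴ * B * (Xt * S + Xb * T) = 1 := by rw [← hspan]; exact hVBV
    calc Sᴴ * S + Tᴴ * T
        = (Xt * S + Xb * T)ᴴ * B * (Xt * S + Xb * T) := by
          simp only [Matrix.conjTranspose_add, Matrix.conjTranspose_mul, Matrix.add_mul,
            Matrix.mul_add, Matrix.mul_assoc, hA1, hA2, hA3, hA4, Matrix.mul_zero,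
            add_zero, zero_add]
      _ = 1 := h1
  have hTT : Tᴴ * T = 1 - Sᴴ * S := by
    rw [← hGram]; abel
  have hSpsd : (Sᴴ * S).PosSemidef := Matrix.posSemidef_conjTranspose_mul_self S
  have hTnorm : ‖T‖ ≤ 1 := myNorm_le_one T (Sᴴ * S) hSpsd hTT
  -- Linv is a unit
  have hLH : Linvᴴ = Linv := hLpsd.isHermitian
  have hL1 : Linv * ((1 + Gᴴ * G) * Linv) = 1 := by
    rw [← Matrix.mul_assoc]; exact hLinv
  have hLunit : IsUnit Linv :=
    ⟨⟨Linv, (1 + Gᴴ * G) * Linv, hL1, mul_eq_one_comm.mp hL1⟩, rfl⟩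
  -- S = -(Gᴴ * T)
  have hSGT : S = -(Gᴴ * T) := by
    have h0 : Linv * ((Xt + Xb * G)ᴴ * B * V) = 0 := by
      have := horth
      rw [Matrix.conjTranspose_mul, hLH] at this
      rw [← this]; simp [Matrix.mul_assoc]
    have hW : (Xt + Xb * G)ᴴ * B * V = 0 := by
      have h2 : (Linv * (1 + Gᴴ * G)) * (Linv * ((Xt + Xb * G)ᴴ * B * V)) =
          ((Xt + Xb * G)ᴴ * B * V) := by
        rw [← Matrix.mul_assoc]
        rw [show Linv * (1 + Gᴴ * G) * Linv * ((Xt + Xb * G)ᴴ * B * V)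
            = (Linv * (1 + Gᴴ * G) * Linv) * ((Xt + Xb * G)ᴴ * B * V) by rw [Matrix.mul_assoc]]
        rw [hLinv, Matrix.one_mul]
      rw [h0, Matrix.mul_zero] at h2
      exact h2.symm
    have h3 : S + Gᴴ * T = 0 := by
      rw [hS, hT]
      calc Xtᴴ * B * V + Gᴴ * (Xbᴴ * B * V)
          = (Xt + Xb * G)ᴴ * B * V := by
            simp [Matrix.conjTranspose_add, Matrix.conjTranspose_mul, Matrix.add_mul,
              Matrix.mul_assoc]
        _ = 0 := hW
    exact eq_neg_of_add_eq_zero_left h3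
  -- norm of S
  have hSnorm : ‖S‖ ≤ ε := by
    rw [hSGT, norm_neg]
    calc ‖Gᴴ * T‖ ≤ ‖Gᴴ‖ * ‖T‖ := Matrix.l2_opNorm_mul _ _
      _ = ε * ‖T‖ := by rw [Matrix.l2_opNorm_conjTranspose, hε]
      _ ≤ ε * 1 := by
          exact mul_le_mul_of_nonneg_left hTnorm hε0
      _ = ε := mul_one ε
  -- inverse of 1 + GᴴG
  have hGpsd : (Gᴴ * G).PosSemidef := Matrix.posSemidef_conjTranspose_mul_self G
  obtain ⟨hGunit, hGinvnorm⟩ := myInv_bound hGpsd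
  -- (Linv * Linv) is a two-sided inverse of 1 + GᴴG
  have hM'L : ((1 + Gᴴ * G) * Linv) * Linv = 1 := by
    rw [mul_eq_one_comm]; exact hL1
  have hLM : Linv * (Linv * (1 + Gᴴ * G)) = 1 := by
    have h := hLinv
    rw [mul_eq_one_comm] at h
    exact h
  have hLLl : (Linv * Linv) * (1 + Gᴴ * G) = 1 := by
    rw [Matrix.mul_assoc]; exact hLM
  have hLLr : (1 + Gᴴ * G) * (Linv * Linv) = 1 := by
    rw [← Matrix.mul_assoc]; exact hM'L
  have hLLinv : (1 + Gᴴ * G)⁻¹ = Linv * Linv := Matrix.inv_eq_left_inv hLLl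
  have hLLnorm : ‖Linv * Linv‖ ≤ 1 := by rw [← hLLinv]; exact hGinvnorm
  have hLnorm : ‖Linv‖ ≤ 1 := by
    have h2 : ‖Linv * Linv‖ = ‖Linv‖ * ‖Linv‖ := by
      rw [← Matrix.l2_opNorm_conjTranspose_mul_self Linv, hLH]
    nlinarith [h2, hLLnorm, norm_nonneg Linv]
  obtain ⟨hL1unit, hL1norm⟩ := myInv_bound hLpsd
  have hL1det : IsUnit (1 + Linv).det := (Matrix.isUnit_iff_isUnit_det _).mp hL1unit
  have hfactL : 1 - Linv = (Gᴴ * G * (Linv * Linv)) * (1 + Linv)⁻¹ := by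
    apply myDivide (Matrix.mul_nonsing_inv _ hL1det)
    calc (1 - Linv) * (1 + Linv) = 1 - Linv * Linv := by noncomm_ring
      _ = (1 + Gᴴ * G) * (Linv * Linv) - Linv * Linv := by rw [hLLr]
      _ = Gᴴ * G * (Linv * Linv) := by noncomm_ring
  have hGGnorm : ‖Gᴴ * G‖ = ε * ε := by
    rw [Matrix.l2_opNorm_conjTranspose_mul_self, hε]
  have hLbound : ‖Linv - 1‖ ≤ ε ^ 2 := by
    rw [norm_sub_rev, hfactL]
    calc ‖Gᴴ * G * (Linv * Linv) * (1 + Linv)⁻¹‖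
        ≤ ‖Gᴴ * G * (Linv * Linv)‖ * ‖(1 + Linv)⁻¹‖ := Matrix.l2_opNorm_mul _ _
      _ ≤ ‖Gᴴ * G * (Linv * Linv)‖ * 1 :=
          mul_le_mul_of_nonneg_left hL1norm (norm_nonneg _)
      _ = ‖Gᴴ * G * (Linv * Linv)‖ := mul_one _
      _ ≤ ‖Gᴴ * G‖ * ‖Linv * Linv‖ := Matrix.l2_opNorm_mul _ _
      _ ≤ ‖Gᴴ * G‖ * 1 := mul_le_mul_of_nonneg_left hLLnorm (norm_nonneg _)
      _ = ε * ε := by rw [mul_one, hGGnorm]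
      _ = ε ^ 2 := (sq ε).symm
  -- the square root R
  have hTTpsd : (Tᴴ * T).PosSemidef := Matrix.posSemidef_conjTranspose_mul_self T
  set R : Matrix (Fin r) (Fin r) ℂ := (open scoped MatrixOrder in CFC.sqrt (Tᴴ * T)) with hRdef
  have hRpsd : R.PosSemidef := by
    open scoped MatrixOrder in exact Matrix.nonneg_iff_posSemidef.mp (CFC.sqrt_nonneg _)
  have hRR : R * R = Tᴴ * T := by
    open scoped MatrixOrder in exact CFC.sqrt_mul_sqrt_self _ (Matrix.nonneg_iff_posSemidef.mpr hTTpsd)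
  -- TᴴT is positive definite
  have hTTpd : (Tᴴ * T).PosDef := by
    refine Matrix.PosDef.of_dotProduct_mulVec_pos hTTpsd.isHermitian fun x hx => ?_
    have hge := hTTpsd.dotProduct_mulVec_nonneg x
    refine lt_of_le_of_ne hge (Ne.symm ?_)
    intro hq0
    set X : EuclideanSpace ℂ (Fin r) := (EuclideanSpace.equiv (Fin r) ℂ).symm x with hXdef
    have hXnorm : 0 < ‖X‖ := by
      rw [norm_pos_iff]
      simpa [hXdef] using hx
    have hre : RCLike.re (star x ⬝ᵥ ((Tᴴ * T) *ᵥ x)) > 0 := by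
      rw [hTT, Matrix.sub_mulVec, Matrix.one_mulVec, dotProduct_sub, map_sub]
      have e1 : RCLike.re (star x ⬝ᵥ x) = ‖X‖ ^ 2 := (myNormSq x).symm
      have e2 : RCLike.re (star x ⬝ᵥ ((Sᴴ * S) *ᵥ x)) =
          ‖(EuclideanSpace.equiv (Fin m) ℂ).symm (S *ᵥ x)‖ ^ 2 := by
        rw [myNormSq, myQF]
      have e3 : ‖(EuclideanSpace.equiv (Fin m) ℂ).symm (S *ᵥ x)‖ ≤ ‖S‖ * ‖X‖ :=
        Matrix.l2_opNorm_mulVec S X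
      have e4 := norm_nonneg ((EuclideanSpace.equiv (Fin m) ℂ).symm (S *ᵥ x))
      have e5 : ‖S‖ * ‖X‖ ≤ ε * ‖X‖ := mul_le_mul_of_nonneg_right hSnorm (le_of_lt hXnorm)
      have e6 := norm_nonneg S
      rw [e1, e2]
      have q1 : ‖(EuclideanSpace.equiv (Fin m) ℂ).symm (S *ᵥ x)‖ ^ 2 ≤ (ε * ‖X‖) ^ 2 := by
        rw [sq, sq]; exact mul_self_le_mul_self e4 (e3.trans e5)
      have q2 : (ε * ‖X‖) ^ 2 = ε ^ 2 * ‖X‖ ^ 2 := by ring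
      have q3 : ε ^ 2 ≤ (1 / 2 : ℝ) ^ 2 := pow_le_pow_left₀ hε0 hε2 2
      have q4 : ε ^ 2 * ‖X‖ ^ 2 ≤ (1 / 2 : ℝ) ^ 2 * ‖X‖ ^ 2 :=
        mul_le_mul_of_nonneg_right q3 (sq_nonneg _)
      have q5 : 0 < ‖X‖ ^ 2 := pow_pos hXnorm 2
      linarith
    rw [hq0] at hre; simp at hre
  have hTTunit : IsUnit (Tᴴ * T).det := (Matrix.isUnit_iff_isUnit_det _).mp hTTpd.isUnit
  have hRdet : IsUnit R.det := by
    have := congrArg Matrix.det hRR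
    rw [Matrix.det_mul] at this
    rw [← this] at hTTunit
    exact isUnit_of_mul_isUnit_left hTTunit
  have hRunit : IsUnit R := (Matrix.isUnit_iff_isUnit_det _).mpr hRdet
  obtain ⟨hR1unit, hR1norm⟩ := myInv_bound hRpsd
  have hR1det : IsUnit (1 + R).det := (Matrix.isUnit_iff_isUnit_det _).mp hR1unit
  have hfactR : 1 - R = (Sᴴ * S) * (1 + R)⁻¹ := by
    apply myDivide (Matrix.mul_nonsing_inv _ hR1det)
    calc (1 - R) * (1 + R) = 1 - R * R := by noncomm_ring
      _ = Sᴴ * S := by rw [hRR, hTT]; noncomm_ring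
  have hRbound : ‖R - 1‖ ≤ ε ^ 2 := by
    rw [norm_sub_rev, hfactR]
    calc ‖(Sᴴ * S) * (1 + R)⁻¹‖
        ≤ ‖Sᴴ * S‖ * ‖(1 + R)⁻¹‖ := Matrix.l2_opNorm_mul _ _
      _ ≤ ‖Sᴴ * S‖ * 1 := mul_le_mul_of_nonneg_left hR1norm (norm_nonneg _)
      _ = ‖S‖ * ‖S‖ := by rw [mul_one, Matrix.l2_opNorm_conjTranspose_mul_self S]
      _ ≤ ε * ε := mul_le_mul hSnorm hSnorm (norm_nonneg S) hε0
      _ = ε ^ 2 := (sq ε).symm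
  have hHH : (T * R⁻¹)ᴴ * (T * R⁻¹) = 1 := by
    have hRinvH : (R⁻¹)ᴴ = R⁻¹ := by
      rw [Matrix.conjTranspose_nonsing_inv, hRpsd.isHermitian]
    calc (T * R⁻¹)ᴴ * (T * R⁻¹) = R⁻¹ᴴ * (Tᴴ * T) * R⁻¹ := by
          simp [Matrix.conjTranspose_mul, Matrix.mul_assoc]
      _ = R⁻¹ * (R * R) * R⁻¹ := by rw [hRinvH, hRR]
      _ = (R⁻¹ * R) * (R * R⁻¹) := by simp [Matrix.mul_assoc]
      _ = 1 := by
          rw [Matrix.nonsing_inv_mul _ hRdet, Matrix.mul_nonsing_inv _ hRdet, Matrix.one_mul]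
  exact ⟨hLbound, hSnorm, hTT, R, hRpsd, hRR, hRbound, hRunit, hHH⟩
end

section
/- Let W, Δ_off, Δ_diag be p×p Hermitian matrices, where W = blkdiag(Λ_m, N) with Λ_m = diag(λ_1,…,λ_m) and N Hermitian of size (p−m), Δ_off strictly block-off-diagonal (zero diagonal blocks) and Δ_diag block-diagonal. Let η·‖Λ‖ := min{|λ − μ| : λ ∈ eig(Λ_m), μ ∈ eig(N)} > 0. Then there exist m eigenvalues λ̂_1,…,λ̂_m of W + Δ_off + Δ_diag with |λ_j − λ̂_j| ≤ min{‖Δ_off‖, ‖Δ_off‖²/(η‖Λ‖)} + ‖Δ_diag‖ for each j = 1,…,m. -/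
open Matrix Finset Module
open scoped Matrix.Norms.L2Operator

section Aux

noncomputable def toE {n : Type*} [Fintype n] (f : n → ℂ) : EuclideanSpace ℂ n :=
  (EuclideanSpace.equiv n ℂ).symm f

@[simp] lemma toE_apply {n : Type*} [Fintype n] (f : n → ℂ) (k : n) : toE f k = f k := rfl

noncomputable def qf {n : Type*} [Fintype n] (A : Matrix n n ℂ) (z : EuclideanSpace ℂ n) : ℝ :=
  RCLike.re (inner (𝕜 := ℂ) z ((EuclideanSpace.equiv n ℂ).symm (A *ᵥ z)))

lemma qf_eq {n : Type*} [Fintype n] (A : Matrix n n ℂ) (z : EuclideanSpace ℂ n) :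
    qf A z = RCLike.re (inner (𝕜 := ℂ) z (toE (A *ᵥ z))) := rfl

lemma qf_add {n : Type*} [Fintype n] (A B : Matrix n n ℂ) (z : EuclideanSpace ℂ n) :
    qf (A + B) z = qf A z + qf B z := by
  unfold qf
  rw [add_mulVec]
  rw [show ((EuclideanSpace.equiv n ℂ).symm (A *ᵥ z + B *ᵥ z) : EuclideanSpace ℂ n)
    = (EuclideanSpace.equiv n ℂ).symm (A *ᵥ z) + (EuclideanSpace.equiv n ℂ).symm (B *ᵥ z)
    from rfl]
  rw [inner_add_right, map_add]

lemma qf_abs_le {n : Type*} [Fintype n] [DecidableEq n] (A : Matrix n n ℂ)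
    (z : EuclideanSpace ℂ n) : |qf A z| ≤ ‖A‖ * ‖z‖ ^ 2 := by
  unfold qf
  refine le_trans (RCLike.abs_re_le_norm _) ?_
  refine le_trans (norm_inner_le_norm _ _) ?_
  have := A.l2_opNorm_mulVec z
  have hz : (0:ℝ) ≤ ‖z‖ := norm_nonneg _
  nlinarith [norm_nonneg ((EuclideanSpace.equiv n ℂ).symm (A *ᵥ z))]

variable {m r : ℕ}

lemma inner_sum_split (f g : EuclideanSpace ℂ (Fin m ⊕ Fin r)) :
    (inner ℂ f g : ℂ) = ∑ i : Fin m, (starRingEnd ℂ) (f (Sum.inl i)) * g (Sum.inl i)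
      + ∑ j : Fin r, (starRingEnd ℂ) (f (Sum.inr j)) * g (Sum.inr j) := by
  simp only [PiLp.inner_apply, RCLike.inner_apply, Fintype.sum_sum_type, mul_comm]

noncomputable def zL (z : EuclideanSpace ℂ (Fin m ⊕ Fin r)) : EuclideanSpace ℂ (Fin m ⊕ Fin r) :=
  toE (Sum.elim (fun i => z (Sum.inl i)) 0)

noncomputable def zR (z : EuclideanSpace ℂ (Fin m ⊕ Fin r)) : EuclideanSpace ℂ (Fin m ⊕ Fin r) :=
  toE (Sum.elim 0 (fun j => z (Sum.inr j)))

lemma zLR_add (z : EuclideanSpace ℂ (Fin m ⊕ Fin r)) : zL z + zR z = z := by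
  ext k
  cases k <;> simp [zL, zR]

lemma inner_zL_zR (z w : EuclideanSpace ℂ (Fin m ⊕ Fin r)) :
    (inner (𝕜 := ℂ) (zL z) (zR w)) = 0 := by
  rw [inner_sum_split]
  simp [zL, zR]

lemma norm_split (z : EuclideanSpace ℂ (Fin m ⊕ Fin r)) :
    ‖z‖ ^ 2 = ‖zL z‖ ^ 2 + ‖zR z‖ ^ 2 := by
  have h := norm_add_sq (𝕜 := ℂ) (zL z) (zR z)
  rw [zLR_add, inner_zL_zR] at h
  simpa using h

lemma qf_shift (c1 c2 : ℝ) (z : EuclideanSpace ℂ (Fin m ⊕ Fin r)) :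
    qf (fromBlocks ((c1 : ℂ) • 1) 0 0 ((c2 : ℂ) • 1)) z
      = c1 * ‖zL z‖ ^ 2 + c2 * ‖zR z‖ ^ 2 := by
  unfold qf
  have hmv : (fromBlocks ((c1 : ℂ) • 1) 0 0 ((c2 : ℂ) • 1)) *ᵥ z
      = Sum.elim (fun i => (c1 : ℂ) * z (Sum.inl i)) (fun j => (c2 : ℂ) * z (Sum.inr j)) := by
    rw [fromBlocks_mulVec]
    funext k
    cases k <;> simp [smul_mulVec, one_mulVec]
  rw [show ((EuclideanSpace.equiv (Fin m ⊕ Fin r) ℂ).symm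
      ((fromBlocks ((c1 : ℂ) • 1) 0 0 ((c2 : ℂ) • 1)) *ᵥ z) : EuclideanSpace ℂ (Fin m ⊕ Fin r))
    = (EuclideanSpace.equiv _ ℂ).symm (Sum.elim (fun i => (c1 : ℂ) * z (Sum.inl i))
        (fun j => (c2 : ℂ) * z (Sum.inr j))) by rw [hmv]]
  rw [inner_sum_split]
  have hL : ‖zL z‖ ^ 2 = RCLike.re (inner (𝕜 := ℂ) (zL z) (zL z)) :=
    (inner_self_eq_norm_sq _).symm
  have hR : ‖zR z‖ ^ 2 = RCLike.re (inner (𝕜 := ℂ) (zR z) (zR z)) :=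
    (inner_self_eq_norm_sq _).symm
  rw [hL, hR, inner_sum_split, inner_sum_split]
  simp only [zL, zR]
  simp [Finset.mul_sum, Complex.add_re, Complex.re_sum, Complex.mul_re, Complex.ofReal_re,
    Complex.ofReal_im]
  congr 1 <;> refine Finset.sum_congr rfl fun k _ => by ring

lemma qf_off_abs (B12 : Matrix (Fin m) (Fin r) ℂ) (z : EuclideanSpace ℂ (Fin m ⊕ Fin r)) :
    |qf (fromBlocks 0 B12 B12ᴴ 0) z| ≤ 2 * ‖fromBlocks 0 B12 B12ᴴ 0‖ * ‖zL z‖ * ‖zR z‖ := by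
  set Δ := fromBlocks 0 B12 B12ᴴ 0 with hΔ
  set a := zL z with ha
  set b := zR z with hb
  have hz : z = a + b := (zLR_add z).symm
  have hainr : ∀ j, (a : (Fin m ⊕ Fin r) → ℂ) (Sum.inr j) = 0 := fun j => rfl
  have hbinl : ∀ i, (b : (Fin m ⊕ Fin r) → ℂ) (Sum.inl i) = 0 := fun i => rfl
  have hDaL : ∀ i, (Δ *ᵥ (a : (Fin m ⊕ Fin r) → ℂ)) (Sum.inl i) = 0 := by
    intro i
    have h : (a : (Fin m ⊕ Fin r) → ℂ)
        = Sum.elim (fun i => z (Sum.inl i)) (0 : Fin r → ℂ) := rfl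
    rw [h, hΔ, fromBlocks_mulVec]
    simp
  have hDbR : ∀ j, (Δ *ᵥ (b : (Fin m ⊕ Fin r) → ℂ)) (Sum.inr j) = 0 := by
    intro j
    have h : (b : (Fin m ⊕ Fin r) → ℂ)
        = Sum.elim (0 : Fin m → ℂ) (fun j => z (Sum.inr j)) := rfl
    rw [h, hΔ, fromBlocks_mulVec]
    simp
  have hLL : (inner (𝕜 := ℂ) a (toE (Δ *ᵥ a))) = 0 := by
    rw [inner_sum_split]
    simp only [toE_apply]
    have e1 : ∀ i : Fin m, (starRingEnd ℂ) (a (Sum.inl i)) * (Δ *ᵥ a) (Sum.inl i) = 0 :=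
      fun i => by rw [hDaL i, mul_zero]
    have e2 : ∀ j : Fin r, (starRingEnd ℂ) (a (Sum.inr j)) * (Δ *ᵥ a) (Sum.inr j) = 0 :=
      fun j => by rw [hainr j, map_zero, zero_mul]
    simp only [e1, e2, Finset.sum_const_zero, add_zero]
  have hRR : (inner (𝕜 := ℂ) b (toE (Δ *ᵥ b))) = 0 := by
    rw [inner_sum_split]
    simp only [toE_apply]
    have e1 : ∀ i : Fin m, (starRingEnd ℂ) (b (Sum.inl i)) * (Δ *ᵥ b) (Sum.inl i) = 0 :=
      fun i => by rw [hbinl i, map_zero, zero_mul]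
    have e2 : ∀ j : Fin r, (starRingEnd ℂ) (b (Sum.inr j)) * (Δ *ᵥ b) (Sum.inr j) = 0 :=
      fun j => by rw [hDbR j, mul_zero]
    simp only [e1, e2, Finset.sum_const_zero, add_zero]
  have hqf : qf Δ z = RCLike.re (inner (𝕜 := ℂ) a (toE (Δ *ᵥ b))
      + inner (𝕜 := ℂ) b (toE (Δ *ᵥ a))) := by
    rw [show qf Δ z = qf Δ (a + b) by rw [← hz], qf_eq]
    have hmv : toE (Δ *ᵥ ((a + b : EuclideanSpace ℂ (Fin m ⊕ Fin r)) : (Fin m ⊕ Fin r) → ℂ))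
        = toE (Δ *ᵥ (a : (Fin m ⊕ Fin r) → ℂ)) + toE (Δ *ᵥ (b : (Fin m ⊕ Fin r) → ℂ)) := by
      show toE (Δ *ᵥ ((a : (Fin m ⊕ Fin r) → ℂ) + (b : (Fin m ⊕ Fin r) → ℂ))) = _
      rw [mulVec_add]
      rfl
    rw [hmv, inner_add_left, inner_add_right, inner_add_right, hLL, hRR, zero_add, add_zero]
  rw [hqf]
  have h1 : ‖(inner (𝕜 := ℂ) a (toE (Δ *ᵥ b)))‖ ≤ ‖Δ‖ * ‖a‖ * ‖b‖ := by
    refine le_trans (norm_inner_le_norm _ _) ?_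
    have := Δ.l2_opNorm_mulVec (b : EuclideanSpace ℂ (Fin m ⊕ Fin r))
    have ha0 : (0:ℝ) ≤ ‖a‖ := norm_nonneg _
    calc ‖a‖ * ‖toE (Δ *ᵥ (b : (Fin m ⊕ Fin r) → ℂ))‖ ≤ ‖a‖ * (‖Δ‖ * ‖b‖) :=
          mul_le_mul_of_nonneg_left this ha0
      _ = ‖Δ‖ * ‖a‖ * ‖b‖ := by ring
  have h2 : ‖(inner (𝕜 := ℂ) b (toE (Δ *ᵥ a)))‖ ≤ ‖Δ‖ * ‖a‖ * ‖b‖ := by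
    refine le_trans (norm_inner_le_norm _ _) ?_
    have := Δ.l2_opNorm_mulVec (a : EuclideanSpace ℂ (Fin m ⊕ Fin r))
    have hb0 : (0:ℝ) ≤ ‖b‖ := norm_nonneg _
    calc ‖b‖ * ‖toE (Δ *ᵥ (a : (Fin m ⊕ Fin r) → ℂ))‖ ≤ ‖b‖ * (‖Δ‖ * ‖a‖) :=
          mul_le_mul_of_nonneg_left this hb0
      _ = ‖Δ‖ * ‖a‖ * ‖b‖ := by ring
  calc |RCLike.re ((inner (𝕜 := ℂ) a (toE (Δ *ᵥ b))) + (inner (𝕜 := ℂ) b (toE (Δ *ᵥ a))))|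
      ≤ ‖(inner (𝕜 := ℂ) a (toE (Δ *ᵥ b))) + (inner (𝕜 := ℂ) b (toE (Δ *ᵥ a)))‖ :=
        RCLike.abs_re_le_norm _
    _ ≤ ‖(inner (𝕜 := ℂ) a (toE (Δ *ᵥ b)))‖ + ‖(inner (𝕜 := ℂ) b (toE (Δ *ᵥ a)))‖ :=
        norm_add_le _ _
    _ ≤ 2 * ‖Δ‖ * ‖a‖ * ‖b‖ := by linarith

end Aux

section Count
variable {n ι : Type*} [Fintype n] [DecidableEq n] [Fintype ι]


lemma qf_expand (A : Matrix n n ℂ) (u : ι → EuclideanSpace ℂ n) (hu : Orthonormal ℂ u)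
    (p : ι → ℝ) (hA : ∀ k, A *ᵥ u k = (p k : ℂ) • u k) (c : ι → ℂ) :
    RCLike.re (inner (𝕜 := ℂ) (∑ k, c k • u k)
      ((EuclideanSpace.equiv n ℂ).symm (A *ᵥ (∑ k, c k • u k : EuclideanSpace ℂ n)))) =
      ∑ k, p k * ‖c k‖ ^ 2 := by
  have hmv : ((EuclideanSpace.equiv n ℂ).symm (A *ᵥ (∑ k, c k • u k : EuclideanSpace ℂ n))
      : EuclideanSpace ℂ n) = ∑ k, (c k * (p k : ℂ)) • u k := by
    show (EuclideanSpace.equiv n ℂ).symm (A.mulVecLin (∑ k, c k • u k : EuclideanSpace ℂ n)) = _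
    have : ((∑ k, c k • u k : EuclideanSpace ℂ n) : n → ℂ) = (∑ k, c k • (u k : n → ℂ) : n → ℂ) := by
      simp
    rw [this, map_sum, map_sum]
    refine Finset.sum_congr rfl fun k _ => ?_
    show (EuclideanSpace.equiv n ℂ).symm (A *ᵥ (c k • (u k : n → ℂ))) = _
    rw [mulVec_smul, hA k]
    rw [smul_smul]
    rfl
  rw [hmv, hu.inner_sum]
  rw [← RCLike.ofReal_re (K := ℂ) (∑ k, p k * ‖c k‖ ^ 2)]
  congr 1
  push_cast
  refine Finset.sum_congr rfl fun k _ => ?_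
  rw [show (starRingEnd ℂ) (c k) * (c k * (p k : ℂ)) = ((starRingEnd ℂ) (c k) * c k) * (p k : ℂ)
    by ring, RCLike.conj_mul]
  exact mul_comm _ _

lemma qf_expand_self (u : ι → EuclideanSpace ℂ n) (hu : Orthonormal ℂ u) (c : ι → ℂ) :
    RCLike.re (inner (𝕜 := ℂ) (∑ k, c k • u k) (∑ k, c k • u k : EuclideanSpace ℂ n)) =
      ∑ k, ‖c k‖ ^ 2 := by
  rw [hu.inner_sum, ← RCLike.ofReal_re (K := ℂ) (∑ k, ‖c k‖ ^ 2)]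
  congr 1
  push_cast
  exact Finset.sum_congr rfl fun k _ => RCLike.conj_mul (c k)

lemma count_mono_le (P Q : Matrix n n ℂ)
    (hPQ : ∀ z : EuclideanSpace ℂ n,
      RCLike.re (inner (𝕜 := ℂ) z ((EuclideanSpace.equiv n ℂ).symm (P *ᵥ z))) ≤
      RCLike.re (inner (𝕜 := ℂ) z ((EuclideanSpace.equiv n ℂ).symm (Q *ᵥ z))))
    (p q : n → ℝ) (u w : n → EuclideanSpace ℂ n) (hu : Orthonormal ℂ u) (hw : Orthonormal ℂ w)
    (hP : ∀ k, P *ᵥ u k = (p k : ℂ) • u k) (hQ : ∀ k, Q *ᵥ w k = (q k : ℂ) • w k) (x : ℝ) :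
    (univ.filter fun k => q k ≤ x).card ≤ (univ.filter fun k => p k ≤ x).card := by
  classical
  set Kq := univ.filter fun k => q k ≤ x with hKq
  set Kp := univ.filter fun k => x < p k with hKp
  set w' : ↥Kq → EuclideanSpace ℂ n := fun k => w k with hw'def
  set u' : ↥Kp → EuclideanSpace ℂ n := fun k => u k with hu'def
  have hw' : Orthonormal ℂ w' := hw.comp _ Subtype.val_injective
  have hu' : Orthonormal ℂ u' := hu.comp _ Subtype.val_injective
  set V := Submodule.span ℂ (Set.range w') with hV
  set U := Submodule.span ℂ (Set.range u') with hU
  have hdisj : V ⊓ U = ⊥ := by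
    rw [Submodule.eq_bot_iff]
    intro v hv
    by_contra hv0
    obtain ⟨hvV, hvU⟩ := Submodule.mem_inf.mp hv
    obtain ⟨c, hc⟩ := (Submodule.mem_span_range_iff_exists_fun ℂ).mp hvV
    obtain ⟨e, he⟩ := (Submodule.mem_span_range_iff_exists_fun ℂ).mp hvU
    have key1 : RCLike.re (inner (𝕜 := ℂ) v ((EuclideanSpace.equiv n ℂ).symm (Q *ᵥ v))) =
        ∑ k : ↥Kq, q k.1 * ‖c k‖ ^ 2 := by
      rw [← hc]; exact qf_expand Q w' hw' (fun k => q ↑k) (fun k => hQ ↑k) c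
    have key2 : RCLike.re (inner (𝕜 := ℂ) v ((EuclideanSpace.equiv n ℂ).symm (P *ᵥ v))) =
        ∑ k : ↥Kp, p k.1 * ‖e k‖ ^ 2 := by
      rw [← he]; exact qf_expand P u' hu' (fun k => p ↑k) (fun k => hP ↑k) e
    have norm1 : RCLike.re (inner (𝕜 := ℂ) v v) = ∑ k, ‖c k‖ ^ 2 := by
      rw [← hc]; exact qf_expand_self w' hw' c
    have norm2 : RCLike.re (inner (𝕜 := ℂ) v v) = ∑ k, ‖e k‖ ^ 2 := by
      rw [← he]; exact qf_expand_self u' hu' e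
    have hex : ∃ k, e k ≠ 0 := by
      by_contra h
      push_neg at h
      apply hv0
      rw [← he]
      simp [h]
    obtain ⟨k0, hk0⟩ := hex
    have h1 : ∑ k : ↥Kq, q k.1 * ‖c k‖ ^ 2 ≤ x * ∑ k, ‖c k‖ ^ 2 := by
      rw [Finset.mul_sum]
      refine Finset.sum_le_sum fun k _ => ?_
      have : q ↑k ≤ x := (Finset.mem_filter.mp k.2).2
      nlinarith [sq_nonneg ‖c k‖]
    have h2 : x * ∑ k, ‖e k‖ ^ 2 < ∑ k : ↥Kp, p k.1 * ‖e k‖ ^ 2 := by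
      rw [Finset.mul_sum]
      refine Finset.sum_lt_sum (fun k _ => ?_) ⟨k0, Finset.mem_univ _, ?_⟩
      · have : x < p ↑k := (Finset.mem_filter.mp k.2).2
        nlinarith [sq_nonneg ‖e k‖]
      · have hx : x < p ↑k0 := (Finset.mem_filter.mp k0.2).2
        have : (0:ℝ) < ‖e k0‖ ^ 2 := pow_pos (norm_pos_iff.mpr hk0) 2
        nlinarith
    have := hPQ v
    rw [key1, key2] at this
    rw [← norm1] at h1
    rw [← norm2] at h2
    linarith
  have hrV : finrank ℂ V = Kq.card := by
    rw [hV, finrank_span_eq_card hw'.linearIndependent, Fintype.card_coe]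
  have hrU : finrank ℂ U = Kp.card := by
    rw [hU, finrank_span_eq_card hu'.linearIndependent, Fintype.card_coe]
  have hsum : finrank ℂ V + finrank ℂ U ≤ Fintype.card n := by
    have h := Submodule.finrank_sup_add_finrank_inf_eq V U
    rw [hdisj, finrank_bot, add_zero] at h
    rw [← h]
    have := Submodule.finrank_le (V ⊔ U)
    simpa [finrank_euclideanSpace] using this
  have hcompl : Kp.card + (univ.filter fun k => p k ≤ x).card = Fintype.card n := by
    rw [hKp]
    have := Finset.card_filter_add_card_filter_not (s := (univ : Finset n))
      (p := fun k => x < p k)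
    simpa [not_lt, Finset.card_univ] using this
  omega

lemma count_mono_lt (P Q : Matrix n n ℂ)
    (hPQ : ∀ z : EuclideanSpace ℂ n,
      RCLike.re (inner (𝕜 := ℂ) z ((EuclideanSpace.equiv n ℂ).symm (P *ᵥ z))) ≤
      RCLike.re (inner (𝕜 := ℂ) z ((EuclideanSpace.equiv n ℂ).symm (Q *ᵥ z))))
    (p q : n → ℝ) (u w : n → EuclideanSpace ℂ n) (hu : Orthonormal ℂ u) (hw : Orthonormal ℂ w)
    (hP : ∀ k, P *ᵥ u k = (p k : ℂ) • u k) (hQ : ∀ k, Q *ᵥ w k = (q k : ℂ) • w k) (x : ℝ) :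
    (univ.filter fun k => q k < x).card ≤ (univ.filter fun k => p k < x).card := by
  classical
  set Kq := univ.filter fun k => q k < x with hKq
  set Kp := univ.filter fun k => x ≤ p k with hKp
  set w' : ↥Kq → EuclideanSpace ℂ n := fun k => w k with hw'def
  set u' : ↥Kp → EuclideanSpace ℂ n := fun k => u k with hu'def
  have hw' : Orthonormal ℂ w' := hw.comp _ Subtype.val_injective
  have hu' : Orthonormal ℂ u' := hu.comp _ Subtype.val_injective
  set V := Submodule.span ℂ (Set.range w') with hV
  set U := Submodule.span ℂ (Set.range u') with hU
  have hdisj : V ⊓ U = ⊥ := by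
    rw [Submodule.eq_bot_iff]
    intro v hv
    by_contra hv0
    obtain ⟨hvV, hvU⟩ := Submodule.mem_inf.mp hv
    obtain ⟨c, hc⟩ := (Submodule.mem_span_range_iff_exists_fun ℂ).mp hvV
    obtain ⟨e, he⟩ := (Submodule.mem_span_range_iff_exists_fun ℂ).mp hvU
    have key1 : RCLike.re (inner (𝕜 := ℂ) v ((EuclideanSpace.equiv n ℂ).symm (Q *ᵥ v))) =
        ∑ k : ↥Kq, q k.1 * ‖c k‖ ^ 2 := by
      rw [← hc]; exact qf_expand Q w' hw' (fun k => q k.1) (fun k => hQ k.1) c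
    have key2 : RCLike.re (inner (𝕜 := ℂ) v ((EuclideanSpace.equiv n ℂ).symm (P *ᵥ v))) =
        ∑ k : ↥Kp, p k.1 * ‖e k‖ ^ 2 := by
      rw [← he]; exact qf_expand P u' hu' (fun k => p k.1) (fun k => hP k.1) e
    have norm1 : RCLike.re (inner (𝕜 := ℂ) v v) = ∑ k : ↥Kq, ‖c k‖ ^ 2 := by
      rw [← hc]; exact qf_expand_self w' hw' c
    have norm2 : RCLike.re (inner (𝕜 := ℂ) v v) = ∑ k : ↥Kp, ‖e k‖ ^ 2 := by
      rw [← he]; exact qf_expand_self u' hu' e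
    have hex : ∃ k, c k ≠ 0 := by
      by_contra h
      push_neg at h
      apply hv0
      rw [← hc]
      simp [h]
    obtain ⟨k0, hk0⟩ := hex
    have h1 : ∑ k : ↥Kq, q k.1 * ‖c k‖ ^ 2 < x * ∑ k : ↥Kq, ‖c k‖ ^ 2 := by
      rw [Finset.mul_sum]
      refine Finset.sum_lt_sum (fun k _ => ?_) ⟨k0, Finset.mem_univ _, ?_⟩
      · have : q k.1 < x := (Finset.mem_filter.mp k.2).2
        nlinarith [sq_nonneg ‖c k‖]
      · have hx : q k0.1 < x := (Finset.mem_filter.mp k0.2).2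
        have : (0:ℝ) < ‖c k0‖ ^ 2 := pow_pos (norm_pos_iff.mpr hk0) 2
        nlinarith
    have h2 : x * ∑ k : ↥Kp, ‖e k‖ ^ 2 ≤ ∑ k : ↥Kp, p k.1 * ‖e k‖ ^ 2 := by
      rw [Finset.mul_sum]
      refine Finset.sum_le_sum fun k _ => ?_
      have : x ≤ p k.1 := (Finset.mem_filter.mp k.2).2
      nlinarith [sq_nonneg ‖e k‖]
    have := hPQ v
    rw [key1, key2] at this
    rw [← norm1] at h1
    rw [← norm2] at h2
    linarith
  have hrV : finrank ℂ V = Kq.card := by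
    rw [hV, finrank_span_eq_card hw'.linearIndependent, Fintype.card_coe]
  have hrU : finrank ℂ U = Kp.card := by
    rw [hU, finrank_span_eq_card hu'.linearIndependent, Fintype.card_coe]
  have hsum : finrank ℂ V + finrank ℂ U ≤ Fintype.card n := by
    have h := Submodule.finrank_sup_add_finrank_inf_eq V U
    rw [hdisj, finrank_bot, add_zero] at h
    rw [← h]
    have := Submodule.finrank_le (V ⊔ U)
    simpa [finrank_euclideanSpace] using this
  have hcompl : Kp.card + (univ.filter fun k => p k < x).card = Fintype.card n := by
    rw [hKp]
    have := Finset.card_filter_add_card_filter_not (s := (univ : Finset n))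
      (p := fun k => x ≤ p k)
    simpa [not_le, Finset.card_univ] using this
  omega

end Count

lemma filter_sum_card {α β : Type*} [Fintype α] [Fintype β] (P : α ⊕ β → Prop) [DecidablePred P] :
    (univ.filter P).card =
      (univ.filter fun a => P (Sum.inl a)).card + (univ.filter fun b => P (Sum.inr b)).card := by
  classical
  rw [← Finset.card_disjSum]
  congr 1
  ext x
  cases x <;> simp [Finset.mem_disjSum]

lemma diag_shift {m : ℕ} (l : Fin m → ℝ) (c1 : ℝ) :
    (diagonal fun i => ((l i : ℝ) : ℂ)) + (c1 : ℂ) • 1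
      = diagonal fun i => ((l i + c1 : ℝ) : ℂ) := by
  ext a b
  by_cases h : a = b <;>
    simp [Matrix.diagonal_apply, Matrix.one_apply, h] <;> push_cast <;> ring

lemma shifted_block_eig {m r : ℕ} (l : Fin m → ℝ) (N : Matrix (Fin r) (Fin r) ℂ)
    (hN : N.IsHermitian) (c1 c2 : ℝ) :
    ∃ w : (Fin m ⊕ Fin r) → EuclideanSpace ℂ (Fin m ⊕ Fin r), Orthonormal ℂ w ∧
      ∀ k, (fromBlocks (diagonal fun i => ((l i : ℝ) : ℂ)) 0 0 N
          + fromBlocks ((c1 : ℂ) • 1) 0 0 ((c2 : ℂ) • 1)) *ᵥ w k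
        = ((Sum.elim (fun i => l i + c1) (fun j => hN.eigenvalues j + c2) k : ℝ) : ℂ) • w k := by
  classical
  set y := hN.eigenvectorBasis with hy
  refine ⟨Sum.elim (fun i => WithLp.toLp 2 (Sum.elim (Pi.single i 1) 0 : (Fin m ⊕ Fin r) → ℂ))
    (fun j => WithLp.toLp 2 (Sum.elim 0 (y j) : (Fin m ⊕ Fin r) → ℂ)), ?_, ?_⟩
  · rw [orthonormal_iff_ite]
    intro a b
    have hinner : ∀ (f g : EuclideanSpace ℂ (Fin m ⊕ Fin r)),
        (inner ℂ f g : ℂ) = ∑ i : Fin m, (starRingEnd ℂ) (f (Sum.inl i)) * g (Sum.inl i)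
          + ∑ j : Fin r, (starRingEnd ℂ) (f (Sum.inr j)) * g (Sum.inr j) := by
      intro f g
      simp only [PiLp.inner_apply, RCLike.inner_apply, Fintype.sum_sum_type, mul_comm]
    cases a with
    | inl i =>
      cases b with
      | inl i' =>
        rw [hinner]
        simp [Pi.single_apply, Finset.sum_ite_eq', eq_comm]
      | inr j' =>
        rw [hinner]
        simp
    | inr j =>
      cases b with
      | inl i' =>
        rw [hinner]
        simp
      | inr j' =>
        rw [hinner]
        have horth := orthonormal_iff_ite.mp y.orthonormal j j'
        rw [show (inner ℂ (y j) (y j') : ℂ) = ∑ t : Fin r, (starRingEnd ℂ) (y j t) * (y j' t) by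
          simp only [PiLp.inner_apply, RCLike.inner_apply, mul_comm]] at horth
        simpa using horth
  · intro k
    cases k with
    | inl i =>
      simp only [Sum.elim_inl]
      rw [fromBlocks_add, fromBlocks_mulVec]
      simp only [add_zero, zero_add, Sum.elim_comp_inl, Sum.elim_comp_inr,
        Matrix.mulVec_zero, Matrix.zero_mulVec, diag_shift, diagonal_mulVec_single]
      funext t
      cases t <;> simp [Pi.single_apply, Sum.elim_inl, Sum.elim_inr] <;> split <;> simp
    | inr j =>
      simp only [Sum.elim_inr]
      rw [fromBlocks_add, fromBlocks_mulVec]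
      simp only [add_zero, zero_add, Sum.elim_comp_inl, Sum.elim_comp_inr,
        Matrix.mulVec_zero, Matrix.zero_mulVec]
      have h2 : (N + (c2 : ℂ) • 1) *ᵥ ⇑(y j) = ((hN.eigenvalues j + c2 : ℝ) : ℂ) • ⇑(y j) := by
        rw [add_mulVec, hN.mulVec_eigenvectorBasis, smul_mulVec, one_mulVec]
        funext t
        push_cast
        simp [Pi.smul_apply, smul_eq_mul]
        ring
      funext t
      cases t with
      | inl t => simp
      | inr t =>
        have h3 := congrFun h2 t
        simpa using h3

lemma amgm (p s b x y : ℝ) (hp : 0 ≤ p) (hs : 0 ≤ s) (hb : 0 ≤ b) (h : b^2 ≤ p*s)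
    (hx : 0 ≤ x) (hy : 0 ≤ y) : 2*b*x*y ≤ p*x^2 + s*y^2 := by
  have h1 : b ≤ Real.sqrt p * Real.sqrt s := by
    rw [← Real.sqrt_mul hp]
    rw [show b = Real.sqrt (b^2) from (Real.sqrt_sq hb).symm]
    exact Real.sqrt_le_sqrt h
  nlinarith [sq_nonneg (Real.sqrt p * x - Real.sqrt s * y), Real.sq_sqrt hp, Real.sq_sqrt hs,
    Real.sqrt_nonneg p, Real.sqrt_nonneg s, mul_nonneg hx hy]

set_option maxHeartbeats 1000000 in
/-- Hermitian perturbation: with `W = blkdiag(Λ_m, N)`, a strictly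
block-off-diagonal Hermitian `Δ_off`, a block-diagonal Hermitian `Δ_diag`, and
spectral gap `η‖Λ‖ > 0` between `eig(Λ_m)` and `eig(N)`, there are `m`
eigenvalues `λ̂_j` of `W + Δ_off + Δ_diag` with
`|λ_j − λ̂_j| ≤ min{‖Δ_off‖, ‖Δ_off‖²/(η‖Λ‖)} + ‖Δ_diag‖`. -/
theorem stmt19 (m r : ℕ) (l : Fin m → ℝ)
    (N : Matrix (Fin r) (Fin r) ℂ) (hN : N.IsHermitian)
    (B12 : Matrix (Fin m) (Fin r) ℂ)
    (D11 : Matrix (Fin m) (Fin m) ℂ) (hD11 : D11.IsHermitian)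
    (D22 : Matrix (Fin r) (Fin r) ℂ) (hD22 : D22.IsHermitian)
    (W Δoff Δdiag : Matrix (Fin m ⊕ Fin r) (Fin m ⊕ Fin r) ℂ)
    (hW : W = Matrix.fromBlocks
      (Matrix.diagonal (fun i => ((l i : ℝ) : ℂ))) 0 0 N)
    (hΔoff : Δoff = Matrix.fromBlocks 0 B12 B12ᴴ 0)
    (hΔdiag : Δdiag = Matrix.fromBlocks D11 0 0 D22)
    (η Λnorm : ℝ) (hgapPos : 0 < η * Λnorm)
    (hgap : ∀ (i : Fin m) (j : Fin r), η * Λnorm ≤ |l i - hN.eigenvalues j|)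
    (hS : (W + Δoff + Δdiag).IsHermitian) :
    ∃ g : Fin m → Fin m ⊕ Fin r, Function.Injective g ∧
      ∀ j : Fin m,
        |l j - hS.eigenvalues (g j)| ≤
          min ‖Δoff‖ (‖Δoff‖ ^ 2 / (η * Λnorm)) + ‖Δdiag‖ := by
  classical
  set γ := η * Λnorm with hγdef
  set b := ‖Δoff‖ with hbdef
  set d := ‖Δdiag‖ with hddef
  set ρ := min b (b ^ 2 / γ) with hρdef
  set s := max ρ γ with hsdef
  set β := ρ + d with hβdef
  have hγ0 : 0 < γ := hgapPos
  have hb0 : 0 ≤ b := norm_nonneg Δoff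
  have hd0 : 0 ≤ d := norm_nonneg Δdiag
  have hρ0 : 0 ≤ ρ := le_min hb0 (div_nonneg (by positivity) hγ0.le)
  have hρb : ρ ≤ b := min_le_left _ _
  have hsρ : ρ ≤ s := le_max_left _ _
  have hρs : b ^ 2 ≤ ρ * s := by
    rcases le_total b γ with h | h
    · have hρeq : ρ = b ^ 2 / γ := min_eq_right (by rw [div_le_iff₀ hγ0]; nlinarith)
      have hργ : ρ * γ = b ^ 2 := by rw [hρeq]; field_simp
      nlinarith [le_max_right ρ γ]
    · have hρeq : ρ = b := min_eq_left (by rw [le_div_iff₀ hγ0]; nlinarith)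
      have hsb : s = b := by rw [hsdef, hρeq]; exact max_eq_left h
      rw [hρeq, hsb]; nlinarith
  have hsγ' : s ≤ ρ + γ := by
    rcases le_total ρ γ with h | h
    · rw [hsdef, max_eq_right h]; linarith
    · rw [hsdef, max_eq_left h]; linarith
  have hs0 : 0 ≤ s := le_trans hρ0 hsρ
  have hβ0 : 0 ≤ β := add_nonneg hρ0 hd0
  -- eigen-families for the shifted block-diagonal comparison matrices
  obtain ⟨wp, hwporth, hwpeig⟩ := shifted_block_eig l N hN β (s + d)
  obtain ⟨wm, hwmorth, hwmeig⟩ := shifted_block_eig l N hN (-β) (-(s + d))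
  set Shp : Matrix (Fin m ⊕ Fin r) (Fin m ⊕ Fin r) ℂ :=
    fromBlocks ((β : ℂ) • 1) 0 0 (((s + d : ℝ) : ℂ) • 1) with hShp
  set Shm : Matrix (Fin m ⊕ Fin r) (Fin m ⊕ Fin r) ℂ :=
    fromBlocks (((-β : ℝ) : ℂ) • 1) 0 0 (((-(s + d) : ℝ) : ℂ) • 1) with hShm
  have hwpeig' : ∀ k, (W + Shp) *ᵥ wp k
      = ((Sum.elim (fun i => l i + β) (fun j => hN.eigenvalues j + (s + d)) k : ℝ) : ℂ) • wp k := by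
    intro k
    rw [hW]
    exact hwpeig k
  have hwmeig' : ∀ k, (W + Shm) *ᵥ wm k
      = ((Sum.elim (fun i => l i + -β) (fun j => hN.eigenvalues j + -(s + d)) k : ℝ) : ℂ) • wm k := by
    intro k
    rw [hW]
    exact hwmeig k
  -- quadratic form bounds
  have key_off : ∀ z : EuclideanSpace ℂ (Fin m ⊕ Fin r),
      |qf Δoff z| ≤ 2 * b * ‖zL z‖ * ‖zR z‖ := by
    intro z
    have h := qf_off_abs B12 z
    rw [← hΔoff] at h
    exact h
  have key_diag : ∀ z : EuclideanSpace ℂ (Fin m ⊕ Fin r),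
      |qf Δdiag z| ≤ d * (‖zL z‖ ^ 2 + ‖zR z‖ ^ 2) := by
    intro z
    have h := qf_abs_le Δdiag z
    rw [norm_split] at h
    exact h
  have key_amgm : ∀ z : EuclideanSpace ℂ (Fin m ⊕ Fin r),
      2 * b * ‖zL z‖ * ‖zR z‖ ≤ ρ * ‖zL z‖ ^ 2 + s * ‖zR z‖ ^ 2 := fun z =>
    amgm ρ s b _ _ hρ0 hs0 hb0 hρs (norm_nonneg _) (norm_nonneg _)
  have hup : ∀ z : EuclideanSpace ℂ (Fin m ⊕ Fin r),
      qf (W + Δoff + Δdiag) z ≤ qf (W + Shp) z := by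
    intro z
    rw [qf_add, qf_add, qf_add, hShp, qf_shift]
    have h1 := key_off z
    have h2 := key_diag z
    have h3 := key_amgm z
    rw [abs_le] at h1 h2
    obtain ⟨h1a, h1b⟩ := h1
    obtain ⟨h2a, h2b⟩ := h2
    nlinarith [h3]
  have hdn : ∀ z : EuclideanSpace ℂ (Fin m ⊕ Fin r),
      qf (W + Shm) z ≤ qf (W + Δoff + Δdiag) z := by
    intro z
    rw [qf_add, qf_add, qf_add, hShm, qf_shift]
    have h1 := key_off z
    have h2 := key_diag z
    have h3 := key_amgm z
    rw [abs_le] at h1 h2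
    obtain ⟨h1a, h1b⟩ := h1
    obtain ⟨h2a, h2b⟩ := h2
    nlinarith [h3]
  -- eigen data for S
  have hSorth : Orthonormal ℂ (fun k => hS.eigenvectorBasis k) := hS.eigenvectorBasis.orthonormal
  have hSeig : ∀ k, (W + Δoff + Δdiag) *ᵥ (hS.eigenvectorBasis k)
      = ((hS.eigenvalues k : ℝ) : ℂ) • (hS.eigenvectorBasis k : EuclideanSpace ℂ (Fin m ⊕ Fin r)) := by
    intro k
    have h := hS.mulVec_eigenvectorBasis k
    rw [RCLike.real_smul_eq_coe_smul (K := ℂ)] at h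
    exact h
  -- counting inequalities
  have cnt_up : ∀ x : ℝ,
      (univ.filter fun i : Fin m => l i + β ≤ x).card
        + (univ.filter fun j : Fin r => hN.eigenvalues j + (s + d) ≤ x).card
      ≤ (univ.filter fun k => hS.eigenvalues k ≤ x).card := by
    intro x
    have h := count_mono_le (W + Δoff + Δdiag) (W + Shp) (fun z => hup z)
      hS.eigenvalues (Sum.elim (fun i => l i + β) (fun j => hN.eigenvalues j + (s + d)))
      (fun k => hS.eigenvectorBasis k) wp hSorth hwporth hSeig hwpeig' x
    rw [filter_sum_card (fun k => Sum.elim (fun i => l i + β)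
      (fun j => hN.eigenvalues j + (s + d)) k ≤ x)] at h
    convert h using 3 <;> ext <;> rw [Finset.mem_filter, Finset.mem_filter] <;> simp
  have cnt_dn : ∀ x : ℝ,
      (univ.filter fun k => hS.eigenvalues k < x).card
      ≤ (univ.filter fun i : Fin m => l i + -β < x).card
        + (univ.filter fun j : Fin r => hN.eigenvalues j + -(s + d) < x).card := by
    intro x
    have h := count_mono_lt (W + Shm) (W + Δoff + Δdiag) (fun z => hdn z)
      (Sum.elim (fun i => l i + -β) (fun j => hN.eigenvalues j + -(s + d))) hS.eigenvalues
      wm (fun k => hS.eigenvectorBasis k) hwmorth hSorth hwmeig' hSeig x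
    rw [filter_sum_card (fun k => Sum.elim (fun i => l i + -β)
      (fun j => hN.eigenvalues j + -(s + d)) k < x)] at h
    simpa using h
  -- core interval counting
  have core : ∀ a c : ℝ, (∃ i0 : Fin m, a ≤ l i0 ∧ l i0 ≤ c) →
      (univ.filter fun i : Fin m => a ≤ l i ∧ l i ≤ c).card
        ≤ (univ.filter fun k => a - β ≤ hS.eigenvalues k ∧ hS.eigenvalues k ≤ c + β).card := by
    rintro a c ⟨i0, hi0a, hi0c⟩
    have hac : a ≤ c := le_trans hi0a hi0c
    have hwin : (univ.filter fun j : Fin r => hN.eigenvalues j + -(s + d) < a - β)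
        ⊆ (univ.filter fun j : Fin r => hN.eigenvalues j + (s + d) ≤ c + β) := by
      intro j hj
      simp only [mem_filter, mem_univ, true_and] at hj ⊢
      by_contra hlt
      push_neg at hlt
      have hgapj := hgap i0 j
      have habs : |l i0 - hN.eigenvalues j| < γ := by
        rw [abs_sub_lt_iff]
        constructor
        · -- l i0 - ν j < γ  (using ν j > c + ρ - s ≥ c - γ)
          have h2 : c + ρ - s < hN.eigenvalues j := by
            have : c + β < hN.eigenvalues j + (s + d) := hlt
            simp only [hβdef] at this ⊢
            linarith
          linarith
        · -- ν j - l i0 < γ (using ν j < a + s - ρ ≤ a + γ)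
          have h1 : hN.eigenvalues j < a + (s - ρ) := by
            have : hN.eigenvalues j + -(s + d) < a - β := hj
            simp only [hβdef] at this ⊢
            linarith
          linarith
      linarith
    have e1 : (univ.filter fun k => a - β ≤ hS.eigenvalues k ∧ hS.eigenvalues k ≤ c + β)
        = (univ.filter fun k => hS.eigenvalues k ≤ c + β)
          \ (univ.filter fun k => hS.eigenvalues k < a - β) := by
      ext k
      simp only [mem_filter, mem_univ, true_and, mem_sdiff, not_lt]
      tauto
    have sub1 : (univ.filter fun k => hS.eigenvalues k < a - β)
        ⊆ (univ.filter fun k => hS.eigenvalues k ≤ c + β) := by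
      intro k hk
      simp only [mem_filter, mem_univ, true_and] at hk ⊢
      linarith
    have e2 : (univ.filter fun i : Fin m => a ≤ l i ∧ l i ≤ c)
        = (univ.filter fun i : Fin m => l i ≤ c) \ (univ.filter fun i : Fin m => l i < a) := by
      ext i
      simp only [mem_filter, mem_univ, true_and, mem_sdiff, not_lt]
      tauto
    have sub2 : (univ.filter fun i : Fin m => l i < a)
        ⊆ (univ.filter fun i : Fin m => l i ≤ c) := by
      intro i hi
      simp only [mem_filter, mem_univ, true_and] at hi ⊢
      linarith
    rw [e1, e2, card_sdiff_of_subset sub1, card_sdiff_of_subset sub2]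
    have hA := cnt_up (c + β)
    have hB := cnt_dn (a - β)
    have r1 : (univ.filter fun i : Fin m => l i + β ≤ c + β)
        = (univ.filter fun i : Fin m => l i ≤ c) := by
      ext i
      simp only [mem_filter, mem_univ, true_and]
      constructor <;> intro <;> linarith
    have r2 : (univ.filter fun i : Fin m => l i + -β < a - β)
        = (univ.filter fun i : Fin m => l i < a) := by
      ext i
      simp only [mem_filter, mem_univ, true_and]
      constructor <;> intro <;> linarith
    rw [r1] at hA
    rw [r2] at hB
    have hw := card_le_card hwin
    have hs1 := card_le_card sub1
    have hs2 := card_le_card sub2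
    omega
  -- Hall condition
  set T : Fin m → Finset (Fin m ⊕ Fin r) :=
    fun j => univ.filter fun k => |l j - hS.eigenvalues k| ≤ β with hT
  have hall : ∀ nn : ℕ, ∀ J : Finset (Fin m), J.card ≤ nn → J.card ≤ (J.biUnion T).card := by
    intro nn
    induction nn with
    | zero =>
      intro J hJ
      rw [Nat.le_zero] at hJ
      simp [hJ]
    | succ nn ih =>
      intro J hJcard
      rcases J.eq_empty_or_nonempty with rfl | hJ
      · simp
      by_cases hsplit : ∃ x : ℝ, (∃ j ∈ J, l j ≤ x) ∧ (∃ j ∈ J, x + 2 * β < l j) ∧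
          ∀ j ∈ J, l j ≤ x ∨ x + 2 * β < l j
      · obtain ⟨x, ⟨j1, hj1J, hj1⟩, ⟨j2, hj2J, hj2⟩, hdich⟩ := hsplit
        set C := J.filter fun j => l j ≤ x with hC
        set D := J.filter fun j => ¬ l j ≤ x with hD
        have hj2D : j2 ∈ D := mem_filter.mpr ⟨hj2J, by push_neg; linarith⟩
        have hj1C : j1 ∈ C := mem_filter.mpr ⟨hj1J, hj1⟩
        have hCD : C.card + D.card = J.card := card_filter_add_card_filter_not _
        have hCsub : C ⊆ J := filter_subset _ _
        have hDsub : D ⊆ J := filter_subset _ _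
        have hCcard : C.card < J.card := by
          have : D.Nonempty := ⟨j2, hj2D⟩
          have := Finset.card_pos.mpr this
          omega
        have hDcard : D.card < J.card := by
          have : C.Nonempty := ⟨j1, hj1C⟩
          have := Finset.card_pos.mpr this
          omega
        have ihC := ih C (by omega)
        have ihD := ih D (by omega)
        have hdisj : Disjoint (C.biUnion T) (D.biUnion T) := by
          rw [Finset.disjoint_left]
          intro k hkC hkD
          obtain ⟨jc, hjc, hkc⟩ := mem_biUnion.mp hkC
          obtain ⟨jd, hjd, hkd⟩ := mem_biUnion.mp hkD
          have hjcx : l jc ≤ x := (mem_filter.mp hjc).2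
          have hjdx : ¬ l jd ≤ x := (mem_filter.mp hjd).2
          have hjdx2 : x + 2 * β < l jd := by
            rcases hdich jd (hDsub hjd) with h | h
            · exact absurd h hjdx
            · exact h
          have h1 : |l jc - hS.eigenvalues k| ≤ β := by
            have := mem_filter.mp hkc
            exact this.2
          have h2 : |l jd - hS.eigenvalues k| ≤ β := by
            have := mem_filter.mp hkd
            exact this.2
          rw [abs_le] at h1 h2
          obtain ⟨h1a, h1b⟩ := h1
          obtain ⟨h2a, h2b⟩ := h2
          linarith
        have hunion : J.biUnion T = (C.biUnion T) ∪ (D.biUnion T) := by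
          have hJCD : C ∪ D = J := Finset.filter_union_filter_not_eq _ J
          rw [← hJCD]
          ext k
          simp only [mem_biUnion, mem_union]
          constructor
          · rintro ⟨j, hj | hj, hk⟩
            · exact Or.inl ⟨j, hj, hk⟩
            · exact Or.inr ⟨j, hj, hk⟩
          · rintro (⟨j, hj, hk⟩ | ⟨j, hj, hk⟩)
            · exact ⟨j, Or.inl hj, hk⟩
            · exact ⟨j, Or.inr hj, hk⟩
        rw [hunion, Finset.card_union_of_disjoint hdisj]
        omega
      · -- no split: single cluster
        push_neg at hsplit
        set a := (J.image l).min' (hJ.image l) with hadef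
        set c := (J.image l).max' (hJ.image l) with hcdef
        obtain ⟨ja, hjaJ, hja⟩ := mem_image.mp ((J.image l).min'_mem (hJ.image l))
        obtain ⟨jc, hjcJ, hjc⟩ := mem_image.mp ((J.image l).max'_mem (hJ.image l))
        have hal : ∀ j ∈ J, a ≤ l j := fun j hj => min'_le _ _ (mem_image_of_mem l hj)
        have hcl : ∀ j ∈ J, l j ≤ c := fun j hj => le_max' _ _ (mem_image_of_mem l hj)
        have hcover : ∀ k, a - β ≤ hS.eigenvalues k → hS.eigenvalues k ≤ c + β →
            ∃ j ∈ J, |l j - hS.eigenvalues k| ≤ β := by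
          intro k hk1 hk2
          by_contra hno
          push_neg at hno
          have hdich : ∀ j ∈ J, l j ≤ hS.eigenvalues k - β ∨
              (hS.eigenvalues k - β) + 2 * β < l j := by
            intro j hj
            have hb := hno j hj
            by_cases h : l j ≤ hS.eigenvalues k - β
            · exact Or.inl h
            · push_neg at h
              right
              by_contra hcon
              push_neg at hcon
              have : |l j - hS.eigenvalues k| ≤ β := abs_le.mpr ⟨by linarith, by linarith⟩
              linarith
          have hex1 : ∃ j ∈ J, l j ≤ hS.eigenvalues k - β := by
            by_contra hno1
            push_neg at hno1
            rcases hdich ja hjaJ with h | h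
            · exact absurd h (not_le.mpr (hno1 ja hjaJ))
            · have : a = l ja := hja.symm
              linarith
          have hex2 : ∃ j ∈ J, (hS.eigenvalues k - β) + 2 * β < l j := by
            by_contra hno2
            push_neg at hno2
            rcases hdich jc hjcJ with h | h
            · have hcx : c = l jc := hjc.symm
              have heq : l jc = hS.eigenvalues k - β := by
                have := hno2 jc hjcJ
                linarith
              have habs : |l jc - hS.eigenvalues k| ≤ β := by
                rw [heq, show hS.eigenvalues k - β - hS.eigenvalues k = -β by ring, abs_neg,
                  abs_of_nonneg hβ0]
              exact absurd habs (not_le.mpr (hno jc hjcJ))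
            · exact absurd h (not_lt.mpr (hno2 jc hjcJ))
          obtain ⟨j, hjJ, hj1', hj2'⟩ := hsplit (hS.eigenvalues k - β) hex1 hex2
          have habs : |l j - hS.eigenvalues k| ≤ β := abs_le.mpr ⟨by linarith, by linarith⟩
          exact absurd habs (not_le.mpr (hno j hjJ))
        have step1 : J.card ≤ (univ.filter fun i : Fin m => a ≤ l i ∧ l i ≤ c).card := by
          refine card_le_card ?_
          intro j hj
          simp only [mem_filter, mem_univ, true_and]
          exact ⟨hal j hj, hcl j hj⟩
        have step2 := core a c ⟨ja, hal ja hjaJ, hcl ja hjaJ⟩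
        have step3 : (univ.filter fun k => a - β ≤ hS.eigenvalues k ∧ hS.eigenvalues k ≤ c + β).card
            ≤ (J.biUnion T).card := by
          refine card_le_card ?_
          intro k hk
          simp only [mem_filter, mem_univ, true_and] at hk
          obtain ⟨j, hjJ, hjk⟩ := hcover k hk.1 hk.2
          exact mem_biUnion.mpr ⟨j, hjJ, mem_filter.mpr ⟨mem_univ _, hjk⟩⟩
        omega
  obtain ⟨g, hginj, hgT⟩ := (Finset.all_card_le_biUnion_card_iff_exists_injective T).mp
    (fun J => hall J.card J le_rfl)
  refine ⟨g, hginj, fun j => ?_⟩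
  have hmem := hgT j
  rw [hT] at hmem
  have := (mem_filter.mp hmem).2
  exact this
end
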